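/- Let ℤ be the infinite line graph with unit weights. For any ε > 0, there exists a nontrivial solution u(t,x) of ∂_t² u = Δu on ℝ × ℤ with u(0,x) = ∂_t u(0,x) = 0 for all x, such that lim_{|x|→∞} |u(t,x)| · e^{−(2+ε)|x| ln|x|} = 0 for every fixed t ∈ ℝ, and u(·,0) is not real-analytic at t = 0. -/

import Mathlib

open Real Filter Finset
open scoped ContDiff
noncomputable section
namespace WaveAux
noncomputable section


abbrev f : ℝ → ℝ := expNegInvGlue

lemma f_smooth : ContDiff ℝ ∞ f := expNegInvGlue.contDiff

lemma iteratedDeriv_zero_fun (n : ℕ) : iteratedDeriv n (fun _ : ℝ => (0:ℝ)) = fun _ => 0 := by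
  induction n with
  | zero => simp [iteratedDeriv_zero]
  | succ n ih =>
    rw [iteratedDeriv_succ, ih]
    funext s
    simp

lemma f_flat (n : ℕ) {t : ℝ} (ht : t ≤ 0) : iteratedDeriv n f t = 0 := by
  rcases lt_or_eq_of_le ht with h | h
  · have hev : f =ᶠ[nhds t] (fun _ => (0:ℝ)) := by
      filter_upwards [Iio_mem_nhds h] with s hs
      exact expNegInvGlue.zero_of_nonpos (le_of_lt hs)
    rw [hev.iteratedDeriv_eq n, iteratedDeriv_zero_fun]
  · subst h
    have hc : ContinuousAt (iteratedDeriv n f) 0 :=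
      (f_smooth.continuous_iteratedDeriv n (by exact_mod_cast le_top)).continuousAt
    have h1 : Tendsto (iteratedDeriv n f) (nhdsWithin 0 (Set.Iio 0)) (nhds (iteratedDeriv n f 0)) :=
      hc.continuousWithinAt.tendsto
    have h2 : Tendsto (iteratedDeriv n f) (nhdsWithin 0 (Set.Iio 0)) (nhds 0) := by
      apply Tendsto.congr' _ tendsto_const_nhds
      filter_upwards [self_mem_nhdsWithin] with s hs
      have hev : f =ᶠ[nhds s] (fun _ => (0:ℝ)) := by
        filter_upwards [Iio_mem_nhds hs] with y hy
        exact expNegInvGlue.zero_of_nonpos (le_of_lt hy)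
      rw [hev.iteratedDeriv_eq n, iteratedDeriv_zero_fun]
    exact tendsto_nhds_unique h1 h2

lemma iter_smooth (k : ℕ) : ContDiff ℝ ∞ (iteratedDeriv k f) := by
  induction k with
  | zero => simpa [iteratedDeriv_zero] using f_smooth
  | succ k ih =>
    rw [iteratedDeriv_succ]
    exact (contDiff_infty_iff_deriv.mp ih).2

lemma iter_hasDerivAt (k : ℕ) (t : ℝ) :
    HasDerivAt (iteratedDeriv k f) (iteratedDeriv (k+1) f t) t := by
  rw [iteratedDeriv_succ]
  exact ((iter_smooth k).differentiable (by simp) t).hasDerivAt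



def cp : ℕ → (ℕ → ℝ) × (ℕ → ℝ)
  | 0 => ⟨fun j => if j = 0 then 1 else 0, fun j => if j = 0 then 1 else if j = 1 then 1/2 else 0⟩
  | n+1 => ⟨(cp n).2,
      fun j => (if j = 0 then 0 else (cp n).2 (j-1)) + 2 * (cp n).2 j - (cp n).1 j⟩

def c (n : ℕ) : ℕ → ℝ := (cp n).1

lemma c_zero (j : ℕ) : c 0 j = if j = 0 then 1 else 0 := rfl
lemma c_one (j : ℕ) : c 1 j = if j = 0 then 1 else if j = 1 then 1/2 else 0 := rfl
lemma c_rec (n j : ℕ) :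
    c (n+2) j = (if j = 0 then 0 else c (n+1) (j-1)) + 2 * c (n+1) j - c n j := rfl

lemma c_eq_zero : ∀ n j, n < j → c n j = 0 := by
  intro n
  induction n using Nat.twoStepInduction with
  | zero => intro j hj; rw [c_zero]; rcases j with _|j; · omega
            · simp
  | one => intro j hj; rw [c_one]; rcases j with _|_|j <;> first | omega | simp
  | more n ih1 ih2 =>
    intro j hj
    rw [c_rec]
    rcases j with _|j
    · omega
    · simp only [Nat.add_sub_cancel]
      rw [ih2 j (by omega), ih1 (j+1) (by omega), ih2 (j+1) (by omega)]
      simp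

lemma c_abs_le : ∀ n j, |c n j| ≤ 4 ^ n := by
  intro n
  induction n using Nat.twoStepInduction with
  | zero => intro j; rw [c_zero]; split <;> norm_num
  | one =>
    intro j
    rw [c_one]
    split
    · norm_num
    · split <;> norm_num [abs_of_nonneg]
  | more n ih1 ih2 =>
    intro j
    rw [c_rec]
    have h1 := ih2 j
    have h2 := ih1 j
    have h3 : |if j = 0 then (0:ℝ) else c (n+1) (j-1)| ≤ 4 ^ (n+1) := by
      split
      · rw [abs_zero]; positivity
      · exact ih2 _
    calc |(if j = 0 then (0:ℝ) else c (n+1) (j-1)) + 2 * c (n+1) j - c n j|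
        ≤ |(if j = 0 then (0:ℝ) else c (n+1) (j-1))| + 2 * |c (n+1) j| + |c n j| := by
          have ha := abs_sub ((if j = 0 then (0:ℝ) else c (n+1) (j-1)) + 2 * c (n+1) j) (c n j)
          have hb := abs_add_le (if j = 0 then (0:ℝ) else c (n+1) (j-1)) (2 * c (n+1) j)
          have hc : |2 * c (n+1) j| = 2 * |c (n+1) j| := by
            rw [abs_mul]; norm_num
          linarith
      _ ≤ 4 ^ (n+1) + 2 * 4 ^ (n+1) + 4 ^ n := by gcongr
      _ ≤ 4 ^ (n+2) := by ring_nf; nlinarith [pow_pos (show (0:ℝ) < 4 by norm_num) n]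


def U (n : ℕ) (t : ℝ) : ℝ := ∑ j ∈ Finset.range (n+1), c n j * iteratedDeriv (2*j) f t

lemma U_hasDerivAt (n : ℕ) (a : ℕ → ℝ) (k : ℕ → ℕ) (t : ℝ) :
    HasDerivAt (fun s => ∑ j ∈ Finset.range n, a j * iteratedDeriv (k j) f s)
      (∑ j ∈ Finset.range n, a j * iteratedDeriv (k j + 1) f t) t := by
  apply HasDerivAt.fun_sum
  intro j _
  exact (iter_hasDerivAt (k j) t).const_mul (a j)

lemma deriv_U_fun (n : ℕ) (a : ℕ → ℝ) (k : ℕ → ℕ) :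
    deriv (fun s => ∑ j ∈ Finset.range n, a j * iteratedDeriv (k j) f s)
      = fun t => ∑ j ∈ Finset.range n, a j * iteratedDeriv (k j + 1) f t :=
  funext fun t => (U_hasDerivAt n a k t).deriv

lemma U_iteratedDeriv2 (n : ℕ) (t : ℝ) :
    iteratedDeriv 2 (U n) t = ∑ j ∈ Finset.range (n+1), c n j * iteratedDeriv (2*j+2) f t := by
  have h0 : U n = fun s => ∑ j ∈ Finset.range (n+1), c n j * iteratedDeriv (2*j) f s := rfl
  rw [show (2:ℕ) = 1 + 1 from rfl, iteratedDeriv_succ, iteratedDeriv_one, h0,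
    deriv_U_fun, deriv_U_fun]

lemma U_zero_val (n : ℕ) {t : ℝ} (ht : t ≤ 0) : U n t = 0 := by
  unfold U
  refine Finset.sum_eq_zero fun j _ => ?_
  rw [f_flat _ ht, mul_zero]

lemma U_deriv_zero (n : ℕ) : deriv (U n) 0 = 0 := by
  have h0 : U n = fun s => ∑ j ∈ Finset.range (n+1), c n j * iteratedDeriv (2*j) f s := rfl
  rw [h0, deriv_U_fun]
  refine Finset.sum_eq_zero fun j _ => ?_
  rw [f_flat _ le_rfl, mul_zero]

lemma U_ext (n m : ℕ) (h : n ≤ m) (t : ℝ) :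
    U n t = ∑ j ∈ Finset.range (m+1), c n j * iteratedDeriv (2*j) f t := by
  unfold U
  refine Finset.sum_subset (by gcongr) fun j hj hj' => ?_
  rw [c_eq_zero n j (by simp at hj hj' ⊢; omega), zero_mul]

lemma key (n : ℕ) (t : ℝ) :
    U (n+2) t + U n t - 2 * U (n+1) t
      = ∑ j ∈ Finset.range (n+2), c (n+1) j * iteratedDeriv (2*j+2) f t := by
  rw [U_ext n (n+2) (by omega) t, U_ext (n+1) (n+2) (by omega) t]
  unfold U
  rw [Finset.mul_sum, ← Finset.sum_add_distrib, ← Finset.sum_sub_distrib]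
  have : ∀ j ∈ Finset.range (n+3),
      c (n+2) j * iteratedDeriv (2*j) f t + c n j * iteratedDeriv (2*j) f t
        - 2 * (c (n+1) j * iteratedDeriv (2*j) f t)
      = (if j = 0 then 0 else c (n+1) (j-1)) * iteratedDeriv (2*j) f t := by
    intro j _
    rw [c_rec]
    ring
  have h2 : (∑ j ∈ Finset.range (n+3),
      (c (n+2) j * iteratedDeriv (2*j) f t + c n j * iteratedDeriv (2*j) f t
        - 2 * (c (n+1) j * iteratedDeriv (2*j) f t)))
      = ∑ j ∈ Finset.range (n+3),
        (if j = 0 then (0:ℝ) else c (n+1) (j-1)) * iteratedDeriv (2*j) f t :=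
    Finset.sum_congr rfl this
  rw [h2]
  have h3 := Finset.sum_range_succ'
    (fun j => (if j = 0 then (0:ℝ) else c (n+1) (j-1)) * iteratedDeriv (2*j) f t) (n+2)
  rw [show n+3 = n+2+1 from rfl, h3]
  simp only [Nat.add_sub_cancel, Nat.succ_ne_zero, if_false, if_true, eq_self_iff_true,
    Nat.add_eq_zero, and_false, add_zero, zero_mul, reduceIte]
  apply Finset.sum_congr rfl
  intro j hj
  congr 2

def u (t : ℝ) (x : ℤ) : ℝ := U x.natAbs t

lemma wave_eq (t : ℝ) (x : ℤ) :
    iteratedDeriv 2 (fun s => u s x) t = u t (x+1) + u t (x-1) - 2 * u t x := by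
  show iteratedDeriv 2 (U x.natAbs) t
      = U (x+1).natAbs t + U (x-1).natAbs t - 2 * U x.natAbs t
  obtain h0 | hpos := eq_or_ne x 0
  · subst h0
    rw [U_iteratedDeriv2]
    norm_num
    simp only [U, c_zero, c_one, Finset.sum_range_succ, Finset.sum_range_zero]
    norm_num
    ring
  · have hm : x.natAbs = (x.natAbs - 1) + 1 := by
      have := Int.natAbs_ne_zero.mpr hpos
      omega
    set m := x.natAbs - 1 with hmdef
    have hcase : ((x+1).natAbs = m+2 ∧ (x-1).natAbs = m) ∨
        ((x+1).natAbs = m ∧ (x-1).natAbs = m+2) := by omega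
    rw [hm, U_iteratedDeriv2]
    have hk := key m t
    rw [show m+1+1 = m+2 from rfl]
    rcases hcase with ⟨h1, h2⟩ | ⟨h1, h2⟩ <;> rw [h1, h2] <;> linarith [hk]

lemma u_contDiff (x : ℤ) : ContDiff ℝ 2 (fun t => u t x) := by
  show ContDiff ℝ 2 (U x.natAbs)
  apply ContDiff.sum
  intro j _
  exact contDiff_const.mul ((iter_smooth (2*j)).of_le (by decide))

lemma u_zero_fun : (fun t => u t 0) = f := by
  funext t
  show U 0 t = f t
  simp [U, c_zero, Finset.sum_range_one]

lemma f_analyticAt {t : ℝ} (ht : 0 < t) : AnalyticAt ℝ f t := by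
  have h1 : AnalyticAt ℝ (fun s : ℝ => Real.exp (-s⁻¹)) t :=
    AnalyticAt.rexp ((analyticAt_id.inv ht.ne').neg)
  apply h1.congr
  filter_upwards [Ioi_mem_nhds ht] with s hs
  simp [f, expNegInvGlue, not_le.mpr (Set.mem_Ioi.mp hs)]

lemma analytic_bound {g : ℝ → ℝ} {t : ℝ} (h : AnalyticAt ℝ g t) :
    ∃ A B : ℝ, 0 ≤ A ∧ 1 ≤ B ∧
      ∀ n : ℕ, |iteratedDeriv n g t| ≤ A * B ^ n * n.factorial := by
  obtain ⟨p, hp⟩ := h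
  obtain ⟨r, hr⟩ := hp
  have hrad : 0 < p.radius := hr.radius_pos
  obtain ⟨r', hr'0, hr'⟩ := ENNReal.lt_iff_exists_nnreal_btwn.mp hrad
  have hr'pos : 0 < (r' : ℝ) := by exact_mod_cast hr'0
  obtain ⟨C, hC, hbound⟩ := p.norm_mul_pow_le_of_lt_radius hr'
  refine ⟨C, max 1 (r' : ℝ)⁻¹, hC.le, le_max_left _ _, fun n => ?_⟩
  have h1 : iteratedDeriv n g t = (n.factorial : ℝ) * (p n fun _ => (1:ℝ)) := by
    rw [iteratedDeriv_eq_iteratedFDeriv, ← hr.factorial_smul 1 n, nsmul_eq_mul]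
  have h2 : |p n fun _ => (1:ℝ)| ≤ ‖p n‖ := by
    have := (p n).le_opNorm (fun _ => (1:ℝ))
    simpa using this
  have h3 : ‖p n‖ ≤ C * ((r':ℝ)⁻¹) ^ n := by
    have hb : ‖p n‖ ≤ C / (r':ℝ)^n := (le_div_iff₀ (by positivity)).mpr (hbound n)
    calc ‖p n‖ ≤ C / (r':ℝ)^n := hb
      _ = C * ((r':ℝ)⁻¹)^n := by rw [div_eq_mul_inv, inv_pow]
  calc |iteratedDeriv n g t| = (n.factorial : ℝ) * |p n fun _ => (1:ℝ)| := by
        rw [h1, abs_mul, abs_of_nonneg (by positivity)]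
    _ ≤ (n.factorial : ℝ) * (C * ((r':ℝ)⁻¹)^n) :=
        mul_le_mul_of_nonneg_left (h2.trans h3) (by positivity)
    _ ≤ C * (max 1 (r':ℝ)⁻¹)^n * n.factorial := by
        have : ((r':ℝ)⁻¹)^n ≤ (max 1 (r':ℝ)⁻¹)^n := by gcongr; exact le_max_right _ _
        have hCn : C * ((r':ℝ)⁻¹)^n ≤ C * (max 1 (r':ℝ)⁻¹)^n :=
          mul_le_mul_of_nonneg_left this hC.le
        nlinarith [(Nat.cast_pos (α := ℝ)).mpr n.factorial_pos]

lemma u_bound {t : ℝ} (ht : 0 < t) : ∃ A B : ℝ, 0 ≤ A ∧ 1 ≤ B ∧ ∀ n : ℕ,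
    |U n t| ≤ ((n:ℝ)+1) * 4^n * A * B^(2*n) * (2*n).factorial := by
  obtain ⟨A, B, hA, hB, hd⟩ := analytic_bound (f_analyticAt ht)
  refine ⟨A, B, hA, hB, fun n => ?_⟩
  have hB0 : (0:ℝ) < B := lt_of_lt_of_le one_pos hB
  calc |U n t| ≤ ∑ j ∈ Finset.range (n+1), |c n j * iteratedDeriv (2*j) f t| :=
        Finset.abs_sum_le_sum_abs _ _
    _ ≤ ∑ j ∈ Finset.range (n+1), 4^n * (A * B^(2*n) * (2*n).factorial) := by
        apply Finset.sum_le_sum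
        intro j hj
        rw [abs_mul]
        have hjn : 2*j ≤ 2*n := by
          simp only [Finset.mem_range] at hj; omega
        have h1 : A * B^(2*j) * ((2*j).factorial:ℝ) ≤ A * B^(2*n) * ((2*n).factorial:ℝ) := by
          have hf : ((2*j).factorial:ℝ) ≤ ((2*n).factorial:ℝ) := by
            exact_mod_cast Nat.factorial_le hjn
          have hp : B^(2*j) ≤ B^(2*n) := pow_le_pow_right₀ hB hjn
          exact mul_le_mul (mul_le_mul le_rfl hp (by positivity) hA) hf (by positivity)
            (by positivity)
        exact mul_le_mul (c_abs_le n j) ((hd (2*j)).trans h1) (abs_nonneg _) (by positivity)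
    _ = ((n:ℝ)+1) * 4^n * A * B^(2*n) * (2*n).factorial := by
        rw [Finset.sum_const, Finset.card_range, nsmul_eq_mul]
        push_cast
        ring

lemma natAbs_tendsto : Tendsto (fun x : ℤ => x.natAbs) cofinite atTop := by
  rw [Filter.tendsto_atTop]
  intro b
  rw [Filter.eventually_cofinite]
  apply Set.Finite.subset (Set.finite_Icc (-(b:ℤ)) (b:ℤ))
  intro x hx
  simp only [Set.mem_setOf_eq, not_le] at hx
  simp only [Set.mem_Icc]
  omega

lemma not_analytic : ¬ AnalyticAt ℝ f 0 := by
  intro h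
  rcases h.eventually_eq_zero_or_eventually_ne_zero with h1 | h2
  · have h1' : ∀ᶠ z in nhdsWithin 0 (Set.Ioi 0), f z = 0 := h1.filter_mono nhdsWithin_le_nhds
    obtain ⟨z, hz1, hz2⟩ := (h1'.and self_mem_nhdsWithin).exists
    exact absurd hz1 (expNegInvGlue.pos_of_pos hz2).ne'
  · have hle : nhdsWithin (0:ℝ) (Set.Iio 0) ≤ nhdsWithin 0 {0}ᶜ :=
      nhdsWithin_mono _ (fun z hz => ne_of_lt hz)
    have h2' : ∀ᶠ z in nhdsWithin (0:ℝ) (Set.Iio 0), f z ≠ 0 := h2.filter_mono hle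
    obtain ⟨z, hz1, hz2⟩ := (h2'.and self_mem_nhdsWithin).exists
    exact hz1 (expNegInvGlue.zero_of_nonpos (le_of_lt hz2))

lemma G_tendsto (ε A B : ℝ) (hε : 0 < ε) (hA : 0 ≤ A) (hB : 1 ≤ B) :
    Tendsto (fun n : ℕ => ((n:ℝ)+1) * 4^n * A * B^(2*n) * ((2*n).factorial : ℝ)
      * Real.exp (-(2+ε) * n * Real.log n)) atTop (nhds 0) := by
  have hB0 : (0:ℝ) < B := lt_of_lt_of_le one_pos hB
  set K : ℝ := 1 + Real.log 4 + 2 * Real.log B + 2 * Real.log 2 with hK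
  apply squeeze_zero' (g := fun n : ℕ => A * Real.exp (-(n:ℝ)))
  · filter_upwards with n
    positivity
  · have hlog : Tendsto (fun n : ℕ => Real.log n) atTop atTop :=
      Real.tendsto_log_atTop.comp tendsto_natCast_atTop_atTop
    filter_upwards [hlog.eventually_ge_atTop ((K+1)/ε), Filter.eventually_ge_atTop 1]
      with n hn hn1
    have hn0 : (0:ℝ) < n := by exact_mod_cast hn1
    have hεlog : K + 1 ≤ ε * Real.log n := by
      rw [div_le_iff₀ hε] at hn
      linarith
    have h1 : ((n:ℝ)+1) ≤ Real.exp n := by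
      have := Real.add_one_le_exp (n:ℝ)
      linarith
    have h2 : (4:ℝ)^n ≤ Real.exp ((n:ℝ) * Real.log 4) := by
      rw [Real.exp_nat_mul, Real.exp_log (by norm_num : (0:ℝ) < 4)]
    have h3 : B^(2*n) ≤ Real.exp ((2*(n:ℝ)) * Real.log B) := by
      rw [show (2*(n:ℝ)) = ((2*n : ℕ) : ℝ) by push_cast; ring,
        Real.exp_nat_mul, Real.exp_log hB0]
    have h4 : ((2*n).factorial : ℝ) ≤ Real.exp (2*(n:ℝ) * Real.log (2*(n:ℝ))) := by
      calc ((2*n).factorial : ℝ) ≤ ((2*n)^(2*n) : ℕ) := by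
            exact_mod_cast Nat.factorial_le_pow (2*n)
        _ = (2*(n:ℝ))^(2*n) := by push_cast; ring
        _ = Real.exp (2*(n:ℝ) * Real.log (2*(n:ℝ))) := by
            rw [show 2*(n:ℝ) * Real.log (2*(n:ℝ)) = ((2*n:ℕ):ℝ) * Real.log (2*(n:ℝ)) by
              push_cast; ring, Real.exp_nat_mul, Real.exp_log (by positivity)]
    calc ((n:ℝ)+1) * 4^n * A * B^(2*n) * ((2*n).factorial : ℝ)
          * Real.exp (-(2+ε) * n * Real.log n)
        ≤ Real.exp n * Real.exp ((n:ℝ) * Real.log 4) * A * Real.exp ((2*(n:ℝ)) * Real.log B)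
          * Real.exp (2*(n:ℝ) * Real.log (2*(n:ℝ))) * Real.exp (-(2+ε) * n * Real.log n) := by
          gcongr <;> positivity
      _ = A * Real.exp ((n:ℝ) + (n:ℝ) * Real.log 4 + 2*(n:ℝ) * Real.log B
            + 2*(n:ℝ) * Real.log (2*(n:ℝ)) + (-(2+ε) * n * Real.log n)) := by
          rw [Real.exp_add, Real.exp_add, Real.exp_add, Real.exp_add]
          ring
      _ ≤ A * Real.exp (-(n:ℝ)) := by
          apply mul_le_mul_of_nonneg_left _ hA
          apply Real.exp_le_exp.mpr
          have hlog2n : Real.log (2*(n:ℝ)) = Real.log 2 + Real.log n :=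
            Real.log_mul (by norm_num) hn0.ne'
          rw [hlog2n]
          have hmul := mul_le_mul_of_nonneg_left hεlog (le_of_lt hn0)
          nlinarith [hmul]
  · have : (fun n : ℕ => A * Real.exp (-(n:ℝ)))
        = fun n : ℕ => A * (Real.exp (-1))^n := by
      funext n
      rw [← Real.exp_nat_mul]
      norm_num
    rw [this]
    have h0 : Tendsto (fun n : ℕ => (Real.exp (-1))^n) atTop (nhds 0) :=
      tendsto_pow_atTop_nhds_zero_of_lt_one (Real.exp_nonneg _)
        (by rw [Real.exp_lt_one_iff]; norm_num)
    simpa using h0.const_mul A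

end
end WaveAux


/-- for every `ε > 0` there is a nontrivial solution of the wave equation on
the integer line graph with zero initial data, which satisfies the spatial decay
`|u(t,x)|·e^{−(2+ε)|x| ln|x|} → 0` as `|x| → ∞` for every fixed `t`, and whose restriction
`u(·,0)` is not real-analytic at `t = 0`. -/
theorem wave_nonuniqueness_line_graph_sharp (ε : ℝ) (hε : 0 < ε) :
    ∃ u : ℝ → ℤ → ℝ,
      (∀ x : ℤ, ContDiff ℝ 2 (fun t => u t x)) ∧
      (∀ (t : ℝ) (x : ℤ),
        iteratedDeriv 2 (fun s => u s x) t
          = u t (x + 1) + u t (x - 1) - 2 * u t x) ∧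
      (∀ x : ℤ, u 0 x = 0) ∧
      (∀ x : ℤ, deriv (fun s => u s x) 0 = 0) ∧
      (∃ (t : ℝ) (x : ℤ), u t x ≠ 0) ∧
      (∀ t : ℝ, Filter.Tendsto
        (fun x : ℤ => |u t x| * Real.exp (-(2 + ε) * |(x : ℝ)| * Real.log |(x : ℝ)|))
        Filter.cofinite (nhds 0)) ∧
      ¬ AnalyticAt ℝ (fun t => u t 0) 0 := by
  refine ⟨WaveAux.u, WaveAux.u_contDiff, WaveAux.wave_eq, ?_, ?_, ?_, ?_, ?_⟩
  · intro x
    exact WaveAux.U_zero_val x.natAbs le_rfl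
  · intro x
    exact WaveAux.U_deriv_zero x.natAbs
  · refine ⟨1, 0, ?_⟩
    have : WaveAux.u 1 0 = WaveAux.f 1 := congrFun WaveAux.u_zero_fun 1
    rw [this]
    exact (expNegInvGlue.pos_of_pos one_pos).ne'
  · intro t
    by_cases ht : t ≤ 0
    · have hz : ∀ x : ℤ, WaveAux.u t x = 0 := fun x => WaveAux.U_zero_val x.natAbs ht
      simp only [hz, abs_zero, zero_mul]
      exact tendsto_const_nhds
    · push_neg at ht
      obtain ⟨A, B, hA, hB, hb⟩ := WaveAux.u_bound ht
      apply squeeze_zero (g := fun x : ℤ =>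
        ((x.natAbs : ℝ)+1) * 4^x.natAbs * A * B^(2*x.natAbs) * ((2*x.natAbs).factorial : ℝ)
          * Real.exp (-(2+ε) * (x.natAbs : ℝ) * Real.log (x.natAbs : ℝ)))
      · intro x
        positivity
      · intro x
        have habs : |((x : ℤ) : ℝ)| = (x.natAbs : ℝ) := by
          simp [Nat.cast_natAbs]
        rw [habs]
        exact mul_le_mul_of_nonneg_right (hb x.natAbs) (Real.exp_nonneg _)
      · exact (WaveAux.G_tendsto ε A B hε hA hB).comp WaveAux.natAbs_tendsto
  · rw [WaveAux.u_zero_fun]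
    exact WaveAux.not_analytic
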